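/- Let A and B be groups and f : A → B a homomorphism inducing an isomorphism on H₁(−; ℤ) (abelianizations) and a surjection on H₂(−; ℤ). Then for every finite k ≥ 1, f induces an isomorphism A/A_k → B/B_k of the quotients by the lower central series terms (Stallings' integral theorem). -/

import Mathlib

/- Since this Mathlib snapshot does not contain group homology, we set up the standard
concrete (Hopf-formula) model of the second integral homology `H₂(G; ℤ)` of a group `G`,
using the canonical free presentation `FreeGroup G → G`:
`H₂(G; ℤ) ≅ (R ∩ [F,F])/[F,R]` where `F = FreeGroup G` and `R` is the kernel of the
canonical projection. This model is functorial, giving the induced map `H₂(f)`. -/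

/-- The canonical presentation `FreeGroup G → G`. -/
abbrev canonicalPresentation (G : Type*) [Group G] : FreeGroup G →* G :=
  FreeGroup.lift id

/-- The relation subgroup `R` of the canonical presentation. -/
abbrev presKer (G : Type*) [Group G] : Subgroup (FreeGroup G) :=
  (canonicalPresentation G).ker

/-- The numerator `R ∩ [F, F]` of Hopf's formula. -/
abbrev hopfNum (G : Type*) [Group G] : Subgroup (FreeGroup G) :=
  presKer G ⊓ commutator (FreeGroup G)

/-- The denominator `[F, R]` of Hopf's formula. -/
abbrev hopfDen (G : Type*) [Group G] : Subgroup (FreeGroup G) :=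
  ⁅(⊤ : Subgroup (FreeGroup G)), presKer G⁆

/-- The Hopf-formula model of the second integral group homology `H₂(G; ℤ)`:
`(R ∩ [F,F])/[F,R]` for the canonical presentation `F/R` of `G`. -/
abbrev H2Group (G : Type*) [Group G] :=
  ↥(hopfNum G) ⧸ ((hopfDen G).subgroupOf (hopfNum G))

/-- Functoriality of the Hopf model: the map induced on `H₂` by a group homomorphism,
coming from the lift `FreeGroup f : FreeGroup A → FreeGroup B`. -/
noncomputable def H2Map {A B : Type*} [Group A] [Group B] (f : A →* B) :
    H2Group A →* H2Group B :=
  QuotientGroup.map _ _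
    (((FreeGroup.map (f : A → B)).domRestrict (hopfNum A)).codRestrict (hopfNum B)
      (fun x => by
        obtain ⟨hker, hcomm⟩ := x.2
        constructor
        · have : (canonicalPresentation B).comp (FreeGroup.map (f : A → B)) =
              f.comp (canonicalPresentation A) := by
            ext a
            simp [canonicalPresentation]
          have heq := congrArg (fun g => g x.1) this
          simp only [MonoidHom.comp_apply] at heq
          show FreeGroup.map (f : A → B) x.1 ∈ (canonicalPresentation B).ker
          rw [MonoidHom.mem_ker, heq]
          have hker' : canonicalPresentation A x.1 = 1 := hker
          rw [hker', map_one]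
        · have : Subgroup.map (FreeGroup.map (f : A → B)) (commutator (FreeGroup A)) ≤
              commutator (FreeGroup B) := by
            rw [commutator, Subgroup.map_commutator]
            exact Subgroup.commutator_mono le_top le_top
          exact this ⟨x.1, hcomm, rfl⟩))
    (by
      rintro ⟨x, hx⟩ hmem
      simp only [Subgroup.mem_subgroupOf] at hmem ⊢
      have : Subgroup.map (FreeGroup.map (f : A → B)) (hopfDen A) ≤ hopfDen B := by
        rw [hopfDen, Subgroup.map_commutator]
        refine Subgroup.commutator_mono le_top ?_
        rintro y ⟨z, hz, rfl⟩
        have : (canonicalPresentation B).comp (FreeGroup.map (f : A → B)) =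
            f.comp (canonicalPresentation A) := by
          ext a; simp [canonicalPresentation]
        have hz' := congrArg (fun g => g z) this
        simp only [MonoidHom.comp_apply] at hz'
        show FreeGroup.map (f : A → B) z ∈ (canonicalPresentation B).ker
        rw [MonoidHom.mem_ker, hz']
        have hz'' : canonicalPresentation A z = 1 := hz
        rw [hz'', map_one]
      exact this ⟨x, hmem, rfl⟩)

open Subgroup
open scoped commutatorElement

/-- If `⁅N,⊤⁆ ≤ D`, the image of `N` in `G⧸D` is central. -/
theorem st_mk_mem_center {G : Type*} [Group G] {N D : Subgroup G} [D.Normal]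
    (h : ⁅N, (⊤ : Subgroup G)⁆ ≤ D) {n : G} (hn : n ∈ N) :
    ((n : G ⧸ D)) ∈ Subgroup.center (G ⧸ D) := by
  rw [Subgroup.mem_center_iff]
  intro g
  induction g using QuotientGroup.induction_on with
  | _ g =>
    show ((g * n : G) : G ⧸ D) = ((n * g : G) : G ⧸ D)
    rw [QuotientGroup.eq]
    have he : (g * n)⁻¹ * (n * g) = ⁅n⁻¹, g⁻¹⁆ := by
      simp [commutatorElement_def]; group
    rw [he]
    exact h (Subgroup.commutator_mem_commutator (inv_mem hn) (Subgroup.mem_top _))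

/-- Central lifting lemma: two homs from a free group that agree modulo a normal
subgroup `N` on generators agree modulo `⁅⊤, N⁆` on the commutator subgroup. -/
theorem st_central_lift {S : Type*} {G : Type*} [Group G] (M M' : FreeGroup S →* G)
    (N : Subgroup G) [N.Normal]
    (h : ∀ s : S, M' (FreeGroup.of s) * (M (FreeGroup.of s))⁻¹ ∈ N)
    {x : FreeGroup S} (hx : x ∈ commutator (FreeGroup S)) :
    M' x * (M x)⁻¹ ∈ ⁅(⊤ : Subgroup G), N⁆ := by
  set D : Subgroup G := ⁅(⊤ : Subgroup G), N⁆ with hD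
  have hND : ⁅N, (⊤ : Subgroup G)⁆ ≤ D := le_of_eq (Subgroup.commutator_comm N ⊤)
  let q : G →* G ⧸ D := QuotientGroup.mk' D
  let c : FreeGroup S →* G ⧸ D :=
    FreeGroup.lift fun s => (q (M' (FreeGroup.of s) * (M (FreeGroup.of s))⁻¹))
  have hcof : ∀ s : S, c (FreeGroup.of s) = q (M' (FreeGroup.of s) * (M (FreeGroup.of s))⁻¹) :=
    fun s => FreeGroup.lift_apply_of
  have hc : ∀ y, c y ∈ Subgroup.center (G ⧸ D) := by
    intro y
    induction y using FreeGroup.induction_on with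
    | C1 => simpa using Subgroup.one_mem _
    | of s =>
      show c (FreeGroup.of s) ∈ _
      rw [hcof s]
      exact st_mk_mem_center hND (h s)
    | inv_of s hs =>
      show c (FreeGroup.of s)⁻¹ ∈ _
      simpa using inv_mem hs
    | mul y z hy hz => simpa using mul_mem hy hz
  let Φ : FreeGroup S →* G ⧸ D :=
    { toFun := fun y => q (M y) * c y
      map_one' := by simp
      map_mul' := by
        intro y z
        simp only [map_mul]
        rw [mul_assoc, ← mul_assoc (q (M z)) (c y) (c z),
          (Subgroup.mem_center_iff.mp (hc y)) (q (M z))]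
        group }
  have hΦ : Φ = q.comp M' := by
    apply FreeGroup.ext_hom
    intro s
    show q (M (FreeGroup.of s)) * c (FreeGroup.of s) = q (M' (FreeGroup.of s))
    rw [hcof s, ← map_mul]
    show ((M (FreeGroup.of s) * (M' (FreeGroup.of s) * (M (FreeGroup.of s))⁻¹) : G) : G ⧸ D)
        = ((M' (FreeGroup.of s) : G) : G ⧸ D)
    rw [QuotientGroup.eq]
    have he : (M (FreeGroup.of s) * (M' (FreeGroup.of s) * (M (FreeGroup.of s))⁻¹))⁻¹
        * M' (FreeGroup.of s)
        = ⁅(M' (FreeGroup.of s) * (M (FreeGroup.of s))⁻¹)⁻¹, (M (FreeGroup.of s))⁻¹⁆ := by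
      group
    rw [he]
    exact hND (Subgroup.commutator_mem_commutator (inv_mem (h s)) (Subgroup.mem_top _))
  have hcx : c x = 1 := by
    have hker : commutator (FreeGroup S) ≤ c.ker := by
      rw [_root_.commutator_def, Subgroup.commutator_le]
      intro g₁ _ g₂ _
      have h1 := Subgroup.mem_center_iff.mp (hc g₁) (c g₂)
      rw [MonoidHom.mem_ker, map_commutatorElement, commutatorElement_def, ← h1]
      group
    exact hker hx
  have hqq : q (M' x) = q (M x) := by
    have hx' := congrArg (fun (ψ : FreeGroup S →* G ⧸ D) => ψ x) hΦ
    simp only [MonoidHom.comp_apply] at hx'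
    rw [← hx']
    show q (M x) * c x = q (M x)
    rw [hcx, mul_one]
  have hone : q (M' x * (M x)⁻¹) = 1 := by
    rw [map_mul, map_inv, hqq, mul_inv_cancel]
  rwa [← QuotientGroup.ker_mk' D, MonoidHom.mem_ker]
open Subgroup

/-- A set-theoretic section `G⧸N → G` extended to the free group. -/
noncomputable def stSectionLift (G : Type*) [Group G] (N : Subgroup G) [N.Normal] :
    FreeGroup (G ⧸ N) →* G :=
  FreeGroup.lift fun x => x.out

theorem st_mk_sectionLift {G : Type*} [Group G] (N : Subgroup G) [N.Normal] :
    (QuotientGroup.mk' N).comp (stSectionLift G N) = canonicalPresentation (G ⧸ N) := by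
  apply FreeGroup.ext_hom
  intro a
  simp [stSectionLift, QuotientGroup.out_eq']

theorem st_mk_sectionLift_apply {G : Type*} [Group G] (N : Subgroup G) [N.Normal]
    (x : FreeGroup (G ⧸ N)) :
    ((stSectionLift G N x : G) : G ⧸ N) = canonicalPresentation (G ⧸ N) x := by
  have := congrArg (fun ψ : FreeGroup (G ⧸ N) →* G ⧸ N => ψ x) (st_mk_sectionLift N)
  simpa using this

/-- The induced map `FreeGroup G →* FreeGroup (G⧸N)`. -/
noncomputable abbrev stFreeMk (G : Type*) [Group G] (N : Subgroup G) [N.Normal] :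
    FreeGroup G →* FreeGroup (G ⧸ N) :=
  FreeGroup.map (⇑(QuotientGroup.mk' N))

theorem st_pres_freeMk {G : Type*} [Group G] (N : Subgroup G) [N.Normal] :
    (canonicalPresentation (G ⧸ N)).comp (stFreeMk G N) =
      (QuotientGroup.mk' N).comp (canonicalPresentation G) := by
  apply FreeGroup.ext_hom
  intro a
  simp

theorem st_pres_freeMk_apply {G : Type*} [Group G] (N : Subgroup G) [N.Normal]
    (x : FreeGroup G) :
    canonicalPresentation (G ⧸ N) (stFreeMk G N x) =
      ((canonicalPresentation G x : G) : G ⧸ N) := by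
  have := congrArg (fun ψ : FreeGroup G →* G ⧸ N => ψ x) (st_pres_freeMk N)
  simpa using this

theorem st_freeMk_surjective {G : Type*} [Group G] (N : Subgroup G) [N.Normal] :
    Function.Surjective (stFreeMk G N) := by
  intro y
  refine ⟨FreeGroup.map (fun x : G ⧸ N => x.out) y, ?_⟩
  show FreeGroup.map _ (FreeGroup.map _ y) = y
  rw [FreeGroup.map.comp]
  have : ((⇑(QuotientGroup.mk' N)) ∘ fun x : G ⧸ N => x.out) = id := by
    funext x
    simp [QuotientGroup.out_eq']
  rw [this]
  exact FreeGroup.map.id y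

/-- Comparison of the section lift with the canonical presentation, on commutators. -/
theorem st_sectionLift_freeMk {G : Type*} [Group G] (N : Subgroup G) [N.Normal]
    {w : FreeGroup G} (hw : w ∈ commutator (FreeGroup G)) :
    stSectionLift G N (stFreeMk G N w) * (canonicalPresentation G w)⁻¹
      ∈ ⁅(⊤ : Subgroup G), N⁆ := by
  refine st_central_lift (canonicalPresentation G)
    ((stSectionLift G N).comp (stFreeMk G N)) N ?_ hw
  intro s
  have h1 : (((stSectionLift G N).comp (stFreeMk G N)) (FreeGroup.of s)
      * (canonicalPresentation G (FreeGroup.of s))⁻¹ : G) ∈ N := by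
    rw [← QuotientGroup.eq_one_iff]
    rw [MonoidHom.comp_apply, QuotientGroup.mk_mul, QuotientGroup.mk_inv,
      st_mk_sectionLift_apply]
    simp
  simpa using h1
theorem st_pres_surjective (G : Type*) [Group G] :
    Function.Surjective (canonicalPresentation G) :=
  fun g => ⟨FreeGroup.of g, by simp⟩

theorem st_hopfNum_map {A B : Type*} [Group A] [Group B] (f : A →* B) {x : FreeGroup A}
    (hx : x ∈ hopfNum A) : FreeGroup.map (⇑f) x ∈ hopfNum B := by
  obtain ⟨hker, hcomm⟩ := hx
  constructor
  · have hcomp : (canonicalPresentation B).comp (FreeGroup.map (f : A → B)) =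
        f.comp (canonicalPresentation A) := by
      apply FreeGroup.ext_hom; intro a; simp
    have heq := congrArg (fun g => g x) hcomp
    simp only [MonoidHom.comp_apply] at heq
    show FreeGroup.map (f : A → B) x ∈ (canonicalPresentation B).ker
    rw [MonoidHom.mem_ker, heq]
    have hker' : canonicalPresentation A x = 1 := hker
    rw [hker', map_one]
  · have hle : Subgroup.map (FreeGroup.map (f : A → B)) (commutator (FreeGroup A)) ≤
        commutator (FreeGroup B) := by
      rw [_root_.commutator_def, Subgroup.map_commutator]
      exact Subgroup.commutator_mono le_top le_top
    exact hle ⟨x, hcomm, rfl⟩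

theorem st_H2Map_mk {A B : Type*} [Group A] [Group B] (f : A →* B) {x : FreeGroup A}
    (hx : x ∈ hopfNum A) (hx' : FreeGroup.map (⇑f) x ∈ hopfNum B) :
    H2Map f (QuotientGroup.mk ⟨x, hx⟩) = QuotientGroup.mk ⟨FreeGroup.map (⇑f) x, hx'⟩ := by
  unfold H2Map
  rw [QuotientGroup.map_mk]
  rfl

/-- Surjectivity part of the Hopf six-term sequence: every element of `N ≤ [G,G]` is,
modulo `⁅⊤,N⁆`, the image under the section lift of an element of `hopfNum (G⧸N)`. -/
theorem st_hopf_onto {G : Type*} [Group G] (N : Subgroup G) [N.Normal]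
    (hN : N ≤ commutator G) {a : G} (ha : a ∈ N) :
    ∃ x, ∃ hx : x ∈ hopfNum (G ⧸ N),
      stSectionLift G N x * a⁻¹ ∈ ⁅(⊤ : Subgroup G), N⁆ := by
  have ha' : a ∈ Subgroup.map (canonicalPresentation G) (commutator (FreeGroup G)) := by
    rw [_root_.commutator_def, Subgroup.map_commutator,
      Subgroup.map_top_of_surjective _ (st_pres_surjective G), ← _root_.commutator_def]
    exact hN ha
  obtain ⟨w, hw, hwa⟩ := ha'
  have h1 : stFreeMk G N w ∈ presKer (G ⧸ N) := by
    rw [MonoidHom.mem_ker, st_pres_freeMk_apply, hwa, QuotientGroup.eq_one_iff]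
    exact ha
  have h2 : stFreeMk G N w ∈ commutator (FreeGroup (G ⧸ N)) := by
    have hle : Subgroup.map (stFreeMk G N) (commutator (FreeGroup G)) ≤
        commutator (FreeGroup (G ⧸ N)) := by
      rw [_root_.commutator_def, Subgroup.map_commutator]
      exact Subgroup.commutator_mono le_top le_top
    exact hle ⟨w, hw, rfl⟩
  refine ⟨stFreeMk G N w, ⟨h1, h2⟩, ?_⟩
  have hcomp := st_sectionLift_freeMk N hw
  rwa [hwa] at hcomp

theorem st_sectionLift_den {G : Type*} [Group G] (N : Subgroup G) [N.Normal]
    {y : FreeGroup (G ⧸ N)} (hy : y ∈ hopfDen (G ⧸ N)) :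
    stSectionLift G N y ∈ ⁅(⊤ : Subgroup G), N⁆ := by
  have hle : Subgroup.map (stSectionLift G N) (hopfDen (G ⧸ N)) ≤
      ⁅(⊤ : Subgroup G), N⁆ := by
    rw [Subgroup.map_commutator]
    refine Subgroup.commutator_mono le_top ?_
    rintro _ ⟨r, hr, rfl⟩
    rw [← QuotientGroup.eq_one_iff, st_mk_sectionLift_apply]
    exact hr
  exact hle ⟨y, hy, rfl⟩

/-- Exactness: if the class of `x` is in the image of `H₂(G) → H₂(G⧸N)`, then its
section lift lies in `⁅⊤,N⁆`. -/
theorem st_hopf_exact_ker {G : Type*} [Group G] (N : Subgroup G) [N.Normal]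
    {x : FreeGroup (G ⧸ N)} (hx : x ∈ hopfNum (G ⧸ N))
    (hr : (QuotientGroup.mk ⟨x, hx⟩ : H2Group (G ⧸ N)) ∈
      Set.range (H2Map (QuotientGroup.mk' N))) :
    stSectionLift G N x ∈ ⁅(⊤ : Subgroup G), N⁆ := by
  obtain ⟨ζ, hζ⟩ := hr
  induction ζ using QuotientGroup.induction_on with
  | _ wS =>
    obtain ⟨w, hw⟩ := wS
    rw [st_H2Map_mk _ hw (st_hopfNum_map _ hw), QuotientGroup.eq,
      Subgroup.mem_subgroupOf] at hζ
    have hζ' : (stFreeMk G N w)⁻¹ * x ∈ hopfDen (G ⧸ N) := by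
      simpa [stFreeMk] using hζ
    have hLψw : stSectionLift G N (stFreeMk G N w) ∈ ⁅(⊤ : Subgroup G), N⁆ := by
      have h := st_sectionLift_freeMk N hw.2
      have hw1 : canonicalPresentation G w = 1 := hw.1
      rwa [hw1, inv_one, mul_one] at h
    have hxeq : x = stFreeMk G N w * ((stFreeMk G N w)⁻¹ * x) := by group
    rw [hxeq, map_mul]
    exact mul_mem hLψw (st_sectionLift_den N hζ')

/-- Exactness: if the section lift of `x` lies in `⁅⊤,N⁆`, then the class of `x` is in
the image of `H₂(G) → H₂(G⧸N)`. -/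
theorem st_hopf_exact_surj {G : Type*} [Group G] (N : Subgroup G) [N.Normal]
    {x : FreeGroup (G ⧸ N)} (hx : x ∈ hopfNum (G ⧸ N))
    (hLx : stSectionLift G N x ∈ ⁅(⊤ : Subgroup G), N⁆) :
    (QuotientGroup.mk ⟨x, hx⟩ : H2Group (G ⧸ N)) ∈
      Set.range (H2Map (QuotientGroup.mk' N)) := by
  obtain ⟨hxker, hxcomm⟩ := id hx
  have hmapcomm : Subgroup.map (stFreeMk G N) (commutator (FreeGroup G)) =
      commutator (FreeGroup (G ⧸ N)) := by
    rw [_root_.commutator_def, Subgroup.map_commutator,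
      Subgroup.map_top_of_surjective _ (st_freeMk_surjective N), ← _root_.commutator_def]
  obtain ⟨y, hy, hyx⟩ : x ∈ Subgroup.map (stFreeMk G N) (commutator (FreeGroup G)) := by
    rw [hmapcomm]; exact hxcomm
  have hπy : canonicalPresentation G y ∈ N := by
    rw [← QuotientGroup.eq_one_iff, ← st_pres_freeMk_apply, hyx]
    exact hxker
  have hcompare := st_sectionLift_freeMk N hy
  rw [hyx] at hcompare
  have hπyD : canonicalPresentation G y ∈ ⁅(⊤ : Subgroup G), N⁆ := by
    have he : canonicalPresentation G y =
        (stSectionLift G N x * (canonicalPresentation G y)⁻¹)⁻¹ * stSectionLift G N x := by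
      group
    rw [he]
    exact mul_mem (inv_mem hcompare) hLx
  have hD : Subgroup.map (canonicalPresentation G)
      ⁅(⊤ : Subgroup (FreeGroup G)), N.comap (canonicalPresentation G)⁆ =
      ⁅(⊤ : Subgroup G), N⁆ := by
    rw [Subgroup.map_commutator, Subgroup.map_top_of_surjective _ (st_pres_surjective G),
      Subgroup.map_comap_eq_self_of_surjective (st_pres_surjective G)]
  obtain ⟨z, hz, hzy⟩ : canonicalPresentation G y ∈ Subgroup.map (canonicalPresentation G)
      ⁅(⊤ : Subgroup (FreeGroup G)), N.comap (canonicalPresentation G)⁆ := by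
    rw [hD]; exact hπyD
  have hwker : y * z⁻¹ ∈ presKer G := by
    rw [MonoidHom.mem_ker, map_mul, map_inv, hzy, mul_inv_cancel]
  have hwcomm : y * z⁻¹ ∈ commutator (FreeGroup G) := by
    refine mul_mem hy (inv_mem ?_)
    have hle : ⁅(⊤ : Subgroup (FreeGroup G)), N.comap (canonicalPresentation G)⁆ ≤
        commutator (FreeGroup G) := by
      rw [_root_.commutator_def]
      exact Subgroup.commutator_mono le_top le_top
    exact hle hz
  refine ⟨QuotientGroup.mk ⟨y * z⁻¹, hwker, hwcomm⟩, ?_⟩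
  rw [st_H2Map_mk _ ⟨hwker, hwcomm⟩ (st_hopfNum_map _ ⟨hwker, hwcomm⟩), QuotientGroup.eq,
    Subgroup.mem_subgroupOf]
  have hzden : stFreeMk G N z ∈ hopfDen (G ⧸ N) := by
    have hle : Subgroup.map (stFreeMk G N)
        ⁅(⊤ : Subgroup (FreeGroup G)), N.comap (canonicalPresentation G)⁆ ≤
        hopfDen (G ⧸ N) := by
      rw [Subgroup.map_commutator]
      refine Subgroup.commutator_mono le_top ?_
      rintro _ ⟨u, hu, rfl⟩
      rw [MonoidHom.mem_ker, st_pres_freeMk_apply, QuotientGroup.eq_one_iff]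
      exact hu
    exact hle ⟨z, hz, rfl⟩
  show ((stFreeMk G N (y * z⁻¹))⁻¹ * x) ∈ hopfDen (G ⧸ N)
  rw [map_mul, map_inv, hyx]
  have he2 : (x * (stFreeMk G N z)⁻¹)⁻¹ * x = stFreeMk G N z := by group
  rw [he2]
  exact hzden
/-- Naturality of the section-lift comparison with respect to `f`. -/
theorem st_natural {A B : Type*} [Group A] [Group B] (f : A →* B)
    (NA : Subgroup A) (NB : Subgroup B) [NA.Normal] [NB.Normal]
    (hle : NA ≤ NB.comap f)
    {x : FreeGroup (A ⧸ NA)} (hx : x ∈ commutator (FreeGroup (A ⧸ NA))) :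
    stSectionLift B NB (FreeGroup.map (⇑(QuotientGroup.map NA NB f hle)) x)
      * (f (stSectionLift A NA x))⁻¹ ∈ ⁅(⊤ : Subgroup B), NB⁆ := by
  refine st_central_lift (f.comp (stSectionLift A NA))
    ((stSectionLift B NB).comp (FreeGroup.map (⇑(QuotientGroup.map NA NB f hle)))) NB ?_ hx
  intro s
  rw [← QuotientGroup.eq_one_iff, MonoidHom.comp_apply, MonoidHom.comp_apply,
    QuotientGroup.mk_mul, QuotientGroup.mk_inv]
  have e1 : (FreeGroup.map (⇑(QuotientGroup.map NA NB f hle))) (FreeGroup.of s) =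
      FreeGroup.of (QuotientGroup.map NA NB f hle s) := FreeGroup.map.of
  have h1 : ((stSectionLift B NB ((FreeGroup.map (⇑(QuotientGroup.map NA NB f hle)))
      (FreeGroup.of s)) : B) : B ⧸ NB) = QuotientGroup.map NA NB f hle s := by
    rw [e1, st_mk_sectionLift_apply]
    simp
  have h2 : ((f (stSectionLift A NA (FreeGroup.of s)) : B) : B ⧸ NB) =
      QuotientGroup.map NA NB f hle s := by
    have e2 : stSectionLift A NA (FreeGroup.of s) = (s : A ⧸ NA).out := FreeGroup.lift_apply_of
    rw [e2, ← QuotientGroup.map_mk (N := NA) NB f hle, QuotientGroup.out_eq']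
  rw [h1, h2, mul_inv_cancel]

theorem st_H2Map_comp {A B C : Type*} [Group A] [Group B] [Group C] (f : A →* B) (g : B →* C)
    (ξ : H2Group A) : H2Map (g.comp f) ξ = H2Map g (H2Map f ξ) := by
  induction ξ using QuotientGroup.induction_on with
  | _ xS =>
    obtain ⟨x, hx⟩ := xS
    rw [st_H2Map_mk _ hx (st_hopfNum_map _ hx),
        st_H2Map_mk f hx (st_hopfNum_map f hx),
        st_H2Map_mk g (st_hopfNum_map f hx) (st_hopfNum_map g (st_hopfNum_map f hx))]
    congr 1
    refine Subtype.ext ?_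
    show FreeGroup.map (⇑(g.comp f)) x = FreeGroup.map (⇑g) (FreeGroup.map (⇑f) x)
    rw [FreeGroup.map.comp]
    rfl

theorem st_H2Map_id {A : Type*} [Group A] (ξ : H2Group A) : H2Map (MonoidHom.id A) ξ = ξ := by
  induction ξ using QuotientGroup.induction_on with
  | _ xS =>
    obtain ⟨x, hx⟩ := xS
    have hid : FreeGroup.map (⇑(MonoidHom.id A)) x = x := FreeGroup.map.id x
    rw [st_H2Map_mk _ hx (by rw [hid]; exact hx)]
    congr 1
    exact Subtype.ext hid

theorem st_H2Map_injective {A B : Type*} [Group A] [Group B] {f : A →* B}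
    (hf : Function.Bijective f) : Function.Injective (H2Map f) := by
  let e := MulEquiv.ofBijective f hf
  have hcomp : (e.symm.toMonoidHom.comp f) = MonoidHom.id A := by
    ext a
    exact e.symm_apply_apply a
  have hli : ∀ ξ, H2Map e.symm.toMonoidHom (H2Map f ξ) = ξ := by
    intro ξ
    rw [← st_H2Map_comp, hcomp, st_H2Map_id]
  exact Function.LeftInverse.injective hli

/-- `H₁`-surjectivity implies `f.range ⊔ B_k = ⊤` for all `k`. -/
theorem st_range_sup {A B : Type*} [Group A] [Group B] (f : A →* B)
    (h1 : Function.Surjective (Abelianization.map f)) :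
    ∀ k, f.range ⊔ (⊤ : Subgroup B).lowerCentralSeries k = ⊤ := by
  have hbase : f.range ⊔ commutator B = ⊤ := by
    rw [eq_top_iff]
    intro b _
    obtain ⟨x, hxb⟩ := h1 (Abelianization.of b)
    obtain ⟨a, rfl⟩ : ∃ a, Abelianization.of a = x := Quotient.exists_rep x
    rw [Abelianization.map_of] at hxb
    have hmem : (f a)⁻¹ * b ∈ commutator B := QuotientGroup.eq.mp hxb
    have hb : b = f a * ((f a)⁻¹ * b) := by group
    rw [hb]
    exact mul_mem (Subgroup.mem_sup_left ⟨a, rfl⟩) (Subgroup.mem_sup_right hmem)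
  intro k
  induction k with
  | zero => simp [Subgroup.lowerCentralSeries_zero]
  | succ k ih =>
    set N := (⊤ : Subgroup B).lowerCentralSeries (k + 1) with hNdef
    have hsucc : N = ⁅(⊤ : Subgroup B).lowerCentralSeries k, (⊤ : Subgroup B)⁆ := rfl
    let q := QuotientGroup.mk' N
    have hqsurj : Function.Surjective q := QuotientGroup.mk'_surjective N
    set Rb := Subgroup.map q f.range with hRb
    set Z := Subgroup.map q ((⊤ : Subgroup B).lowerCentralSeries k) with hZ
    have hZc : Z ≤ Subgroup.center (B ⧸ N) := by
      rintro _ ⟨x, hxmem, rfl⟩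
      exact st_mk_mem_center (le_of_eq hsucc.symm) hxmem
    haveI hZn : Z.Normal := by
      constructor
      intro z hz g
      rw [Subgroup.mem_center_iff.mp (hZc hz) g]
      simpa using hz
    have hsup1 : Rb ⊔ Z = ⊤ := by
      rw [hRb, hZ, ← Subgroup.map_sup, ih, Subgroup.map_top_of_surjective _ hqsurj]
    have hsupC : Rb ⊔ Subgroup.map q (commutator B) = ⊤ := by
      rw [hRb, ← Subgroup.map_sup, hbase, Subgroup.map_top_of_surjective _ hqsurj]
    haveI hRbN : Rb.Normal := by
      constructor
      intro n hn g
      have hg : g ∈ Rb ⊔ Z := hsup1 ▸ Subgroup.mem_top g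
      rw [← SetLike.mem_coe, Subgroup.mul_normal] at hg
      obtain ⟨r, hr, z, hz, rfl⟩ := hg
      have hzc := Subgroup.mem_center_iff.mp (hZc hz)
      have he : r * z * n * (r * z)⁻¹ = r * (z * n * z⁻¹) * r⁻¹ := by group
      have he2 : z * n * z⁻¹ = n := by rw [← hzc n]; group
      rw [he, he2]
      exact mul_mem (mul_mem hr hn) (inv_mem hr)
    let p := QuotientGroup.mk' Rb
    have hpsurj : Function.Surjective p := QuotientGroup.mk'_surjective Rb
    have e1 : Subgroup.map p Rb = ⊥ := by
      rw [eq_bot_iff]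
      rintro _ ⟨r, hr, rfl⟩
      rw [Subgroup.mem_bot]
      exact (QuotientGroup.eq_one_iff r).mpr hr
    have e2 : Subgroup.map p (Subgroup.map q (commutator B)) =
        commutator ((B ⧸ N) ⧸ Rb) := by
      rw [_root_.commutator_def, Subgroup.map_commutator, Subgroup.map_commutator,
        Subgroup.map_top_of_surjective _ hqsurj, Subgroup.map_top_of_surjective _ hpsurj,
        ← _root_.commutator_def]
    have hpZ : Subgroup.map p Z ≤ Subgroup.center ((B ⧸ N) ⧸ Rb) := by
      rintro _ ⟨z, hz, rfl⟩
      rw [Subgroup.mem_center_iff]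
      intro g
      obtain ⟨g, rfl⟩ := hpsurj g
      rw [← map_mul, ← map_mul, Subgroup.mem_center_iff.mp (hZc hz) g]
    have etop : (⊤ : Subgroup ((B ⧸ N) ⧸ Rb)) = commutator ((B ⧸ N) ⧸ Rb) := by
      calc (⊤ : Subgroup ((B ⧸ N) ⧸ Rb)) = Subgroup.map p ⊤ :=
            (Subgroup.map_top_of_surjective _ hpsurj).symm
        _ = Subgroup.map p (Rb ⊔ Subgroup.map q (commutator B)) := by rw [hsupC]
        _ = Subgroup.map p Rb ⊔ Subgroup.map p (Subgroup.map q (commutator B)) :=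
            Subgroup.map_sup _ _ _
        _ = ⊥ ⊔ commutator ((B ⧸ N) ⧸ Rb) := by rw [e1, e2]
        _ = commutator ((B ⧸ N) ⧸ Rb) := bot_sup_eq _
    have ecen : (⊤ : Subgroup ((B ⧸ N) ⧸ Rb)) ≤ Subgroup.center ((B ⧸ N) ⧸ Rb) := by
      calc (⊤ : Subgroup ((B ⧸ N) ⧸ Rb)) = Subgroup.map p ⊤ :=
            (Subgroup.map_top_of_surjective _ hpsurj).symm
        _ = Subgroup.map p (Rb ⊔ Z) := by rw [hsup1]
        _ = Subgroup.map p Rb ⊔ Subgroup.map p Z := Subgroup.map_sup _ _ _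
        _ = ⊥ ⊔ Subgroup.map p Z := by rw [e1]
        _ = Subgroup.map p Z := bot_sup_eq _
        _ ≤ Subgroup.center ((B ⧸ N) ⧸ Rb) := hpZ
    have hcombot : commutator ((B ⧸ N) ⧸ Rb) = ⊥ := by
      rw [_root_.commutator_def, eq_bot_iff, Subgroup.commutator_le]
      intro g₁ _ g₂ _
      rw [Subgroup.mem_bot, commutatorElement_eq_one_iff_commute]
      exact (Subgroup.mem_center_iff.mp (ecen (Subgroup.mem_top g₁)) g₂).symm
    have htopbot : (⊤ : Subgroup ((B ⧸ N) ⧸ Rb)) = ⊥ := etop.trans hcombot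
    have hRbtop : Rb = ⊤ := by
      rw [eq_top_iff]
      intro g _
      have : p g ∈ (⊥ : Subgroup ((B ⧸ N) ⧸ Rb)) := htopbot ▸ Subgroup.mem_top (p g)
      rw [Subgroup.mem_bot] at this
      exact (QuotientGroup.eq_one_iff g).mp this
    rw [eq_top_iff]
    intro b _
    have hqb : q b ∈ Rb := hRbtop ▸ Subgroup.mem_top (q b)
    obtain ⟨r, hr, hrb⟩ := hqb
    have hmem : r⁻¹ * b ∈ N := by
      rw [← QuotientGroup.eq]
      exact hrb
    have hb : b = r * (r⁻¹ * b) := by group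
    rw [hb]
    exact mul_mem (Subgroup.mem_sup_left hr) (Subgroup.mem_sup_right hmem)
theorem st_lcs_le {A B : Type*} [Group A] [Group B] (f : A →* B) (k : ℕ) :
    (⊤ : Subgroup A).lowerCentralSeries k ≤ ((⊤ : Subgroup B).lowerCentralSeries k).comap f :=
  Subgroup.map_le_iff_le_comap.mp (lowerCentralSeries.map f k)

theorem st_map_bijective {A B : Type*} [Group A] [Group B] (f : A →* B)
    {NA : Subgroup A} {NB : Subgroup B} [NA.Normal] [NB.Normal]
    (hle : NA ≤ NB.comap f)
    (hinj : ∀ a, f a ∈ NB → a ∈ NA) (hsur : f.range ⊔ NB = ⊤) :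
    Function.Bijective (QuotientGroup.map NA NB f hle) := by
  constructor
  · intro x y
    induction x using QuotientGroup.induction_on with
    | _ a =>
      induction y using QuotientGroup.induction_on with
      | _ a' =>
        intro h
        rw [QuotientGroup.map_mk, QuotientGroup.map_mk, QuotientGroup.eq] at h
        rw [QuotientGroup.eq]
        apply hinj
        rw [map_mul, map_inv]
        exact h
  · intro y
    induction y using QuotientGroup.induction_on with
    | _ b =>
      have hb : b ∈ f.range ⊔ NB := hsur ▸ Subgroup.mem_top b
      rw [← SetLike.mem_coe, Subgroup.mul_normal] at hb
      obtain ⟨r, hr, n, hn, rfl⟩ := hb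
      obtain ⟨a, rfl⟩ := hr
      refine ⟨QuotientGroup.mk a, ?_⟩
      rw [QuotientGroup.map_mk, QuotientGroup.eq]
      simpa using hn

theorem st_inj {A B : Type*} [Group A] [Group B] (f : A →* B)
    (h1 : Function.Bijective (Abelianization.map f))
    (h2 : Function.Surjective (H2Map f)) :
    ∀ k, ∀ a : A, f a ∈ (⊤ : Subgroup B).lowerCentralSeries k → a ∈ (⊤ : Subgroup A).lowerCentralSeries k := by
  intro k
  induction k with
  | zero => intro a _; exact Subgroup.mem_top a
  | succ k ih =>
    cases k with
    | zero =>
      intro a ha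
      have hone : Abelianization.map f (Abelianization.of a) = 1 := by
        rw [Abelianization.map_of]
        exact (QuotientGroup.eq_one_iff _).mpr ha
      have h0 : Abelianization.of a = 1 := by
        apply h1.1
        rw [hone, map_one]
      exact (QuotientGroup.eq_one_iff _).mp h0
    | succ j =>
      intro a ha
      set NA := (⊤ : Subgroup A).lowerCentralSeries (j + 1) with hNA
      set NB := (⊤ : Subgroup B).lowerCentralSeries (j + 1) with hNB
      have hsuccA : (⊤ : Subgroup A).lowerCentralSeries (j + 2) = ⁅NA, (⊤ : Subgroup A)⁆ := rfl
      have hsuccB : (⊤ : Subgroup B).lowerCentralSeries (j + 2) = ⁅NB, (⊤ : Subgroup B)⁆ := rfl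
      have hDA : (⊤ : Subgroup A).lowerCentralSeries (j + 2) = ⁅(⊤ : Subgroup A), NA⁆ := by
        rw [hsuccA, Subgroup.commutator_comm]
      have hDB : (⊤ : Subgroup B).lowerCentralSeries (j + 2) = ⁅(⊤ : Subgroup B), NB⁆ := by
        rw [hsuccB, Subgroup.commutator_comm]
      have haN : a ∈ NA := ih a (Subgroup.lowerCentralSeries_antitone ⊤ (Nat.le_succ (j + 1)) ha)
      have hleJ : NA ≤ NB.comap f := st_lcs_le f (j + 1)
      set fbar := QuotientGroup.map NA NB f hleJ with hfbar
      have hfbarBij : Function.Bijective fbar :=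
        st_map_bijective f hleJ (fun a' ha' => ih a' ha') (st_range_sup f h1.2 (j + 1))
      have hNAc : NA ≤ commutator A := by
        rw [← Subgroup.top_lowerCentralSeries_one]
        exact Subgroup.lowerCentralSeries_antitone ⊤ (by omega)
      obtain ⟨x, hx, hxa⟩ := st_hopf_onto NA hNAc haN
      have hnat := st_natural f NA NB hleJ (Subgroup.mem_inf.mp hx).2
      have hfLA : f (stSectionLift A NA x) ∈ ⁅(⊤ : Subgroup B), NB⁆ := by
        have h1' : f (stSectionLift A NA x * a⁻¹) ∈ ⁅(⊤ : Subgroup B), NB⁆ := by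
          have hmaple : Subgroup.map f ⁅(⊤ : Subgroup A), NA⁆ ≤ ⁅(⊤ : Subgroup B), NB⁆ := by
            rw [Subgroup.map_commutator]
            exact Subgroup.commutator_mono le_top (Subgroup.map_le_iff_le_comap.mpr hleJ)
          exact hmaple ⟨_, hxa, rfl⟩
        have h2' : f a ∈ ⁅(⊤ : Subgroup B), NB⁆ := by rw [← hDB]; exact ha
        have he : f (stSectionLift A NA x) = f (stSectionLift A NA x * a⁻¹) * f a := by
          rw [← map_mul]; congr 1; group
        rw [he]; exact mul_mem h1' h2'
      have hLB : stSectionLift B NB (FreeGroup.map (⇑fbar) x) ∈ ⁅(⊤ : Subgroup B), NB⁆ := by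
        have he : stSectionLift B NB (FreeGroup.map (⇑fbar) x)
            = (stSectionLift B NB (FreeGroup.map (⇑fbar) x) * (f (stSectionLift A NA x))⁻¹)
              * f (stSectionLift A NA x) := by group
        rw [he]; exact mul_mem hnat hfLA
      have hxB : FreeGroup.map (⇑fbar) x ∈ hopfNum (B ⧸ NB) := st_hopfNum_map fbar hx
      obtain ⟨η, hη⟩ := st_hopf_exact_surj NB hxB hLB
      obtain ⟨ζ, rfl⟩ := h2 η
      have hcompEq : (QuotientGroup.mk' NB).comp f = fbar.comp (QuotientGroup.mk' NA) := by
        ext a'; rfl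
      have hstep : H2Map fbar (H2Map (QuotientGroup.mk' NA) ζ) =
          H2Map fbar (QuotientGroup.mk ⟨x, hx⟩) := by
        rw [← st_H2Map_comp, ← hcompEq, st_H2Map_comp, hη, st_H2Map_mk fbar hx hxB]
      have hxeq : H2Map (QuotientGroup.mk' NA) ζ = QuotientGroup.mk ⟨x, hx⟩ :=
        st_H2Map_injective hfbarBij hstep
      have hLA : stSectionLift A NA x ∈ ⁅(⊤ : Subgroup A), NA⁆ :=
        st_hopf_exact_ker NA hx ⟨ζ, hxeq⟩
      have ha2 : a ∈ ⁅(⊤ : Subgroup A), NA⁆ := by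
        have he : a = (stSectionLift A NA x * a⁻¹)⁻¹ * stSectionLift A NA x := by group
        rw [he]
        exact mul_mem (inv_mem hxa) hLA
      rw [hDA]
      exact ha2
/-- Stallings' integral theorem: if `f : A → B` induces an isomorphism on
`H₁(−; ℤ)` (abelianizations) and a surjection on `H₂(−; ℤ)`, then for every finite
`k`, `f` induces an isomorphism `A/A_k → B/B_k` of lower central series quotients. -/
theorem stmt16 {A B : Type*} [Group A] [Group B] (f : A →* B)
    (h1 : Function.Bijective (Abelianization.map f))
    (h2 : Function.Surjective (H2Map f))
    (k : ℕ)
    (hle : (⊤ : Subgroup A).lowerCentralSeries k ≤ ((⊤ : Subgroup B).lowerCentralSeries k).comap f) :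
    Function.Bijective
      (QuotientGroup.map ((⊤ : Subgroup A).lowerCentralSeries k) ((⊤ : Subgroup B).lowerCentralSeries k) f hle) := by
  exact st_map_bijective f hle (st_inj f h1 h2 k) (st_range_sup f h1.2 k)
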